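/- arXiv:2508.06034 — 2 statements merged into one kernel-verified Lean document; each statement's English description precedes it below -/
import Mathlib

section
/- Let G be a finite simple graph on a nonempty finite vertex set V in which every vertex has positive degree, and assume G is connected. Let Â be its symmetrically normalized adjacency matrix. Then every real vector y indexed by V satisfying Â.mulVec y = y is a scalar multiple of the vector v ↦ √(d(v)); hence the eigenspace of Â for the eigenvalue 1 is one-dimensional. -/
open Matrix

/-- For a connected graph with positive degrees, every fixed vector of the symmetrically
normalized adjacency matrix is a scalar multiple of `v ↦ √(d v)`; hence the eigenspace
for the eigenvalue 1 is one-dimensional. -/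
theorem stmt_5 {V : Type*} [Fintype V] [Nonempty V] [DecidableEq V]
    (G : SimpleGraph V) [DecidableRel G.Adj]
    (hdeg : ∀ v : V, 0 < G.degree v)
    (hconn : G.Connected)
    (Ahat : Matrix V V ℝ)
    (hAhat : ∀ u v : V, Ahat u v =
      G.adjMatrix ℝ u v / (Real.sqrt (G.degree u) * Real.sqrt (G.degree v))) :
    (∀ y : V → ℝ, Ahat.mulVec y = y →
      ∃ c : ℝ, y = c • (fun v : V => Real.sqrt (G.degree v))) ∧
    Module.finrank ℝ (Module.End.eigenspace (Matrix.mulVecLin Ahat) 1) = 1 := by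
  set s : V → ℝ := fun v => Real.sqrt (G.degree v) with hsdef
  have hdpos : ∀ v, (0:ℝ) < (G.degree v : ℝ) := fun v => by exact_mod_cast hdeg v
  have hspos : ∀ v, 0 < s v := fun v => Real.sqrt_pos.mpr (hdpos v)
  have hsne : ∀ v, s v ≠ 0 := fun v => (hspos v).ne'
  have hs2 : ∀ v, s v * s v = (G.degree v : ℝ) :=
    fun v => Real.mul_self_sqrt (hdpos v).le
  have hrow : ∀ u : V, ∑ v, (G.adjMatrix ℝ) u v = (G.degree u : ℝ) := by
    intro u
    simp [SimpleGraph.adjMatrix_apply, Finset.sum_boole, SimpleGraph.degree,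
      SimpleGraph.neighborFinset_eq_filter]
  -- Part 1
  have part1 : ∀ y : V → ℝ, Ahat.mulVec y = y → ∃ c : ℝ, y = c • s := by
    intro y hy
    set x : V → ℝ := fun v => y v / s v with hxdef
    have hyx : ∀ v, y v = x v * s v := fun v => (div_mul_cancel₀ _ (hsne v)).symm
    have hfix : ∀ u : V, ∑ v, (G.adjMatrix ℝ) u v * x v = (G.degree u : ℝ) * x u := by
      intro u
      have h1 : (Ahat.mulVec y) u = y u := congrFun hy u
      have key : ∀ (a b c z : ℝ), b ≠ 0 → c ≠ 0 → a / (b * c) * (z * c) = a * z / b := by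
        intro a b c z hb hc; field_simp
      have h2 : ∀ v, Ahat u v * y v = ((G.adjMatrix ℝ) u v * x v) / s u := by
        intro v
        rw [hAhat, hyx v]
        exact key _ (s u) (s v) _ (hsne u) (hsne v)
      have h3 : (Ahat.mulVec y) u = (∑ v, (G.adjMatrix ℝ) u v * x v) / s u := by
        simp only [mulVec, dotProduct]
        rw [Finset.sum_congr rfl (fun v _ => h2 v), Finset.sum_div]
      rw [h3, hyx u, div_eq_iff (hsne u)] at h1
      rw [h1, mul_assoc, hs2 u, mul_comm]
    obtain ⟨u0, hu0⟩ := Finite.exists_max x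
    have adjstep : ∀ a b : V, G.Adj a b → x a = x u0 → x b = x u0 := by
      intro a b hab ha
      have h1 : ∑ v, (G.adjMatrix ℝ) a v * (x u0 - x v) = 0 := by
        have h2 := hfix a
        rw [ha] at h2
        have : ∑ v, (G.adjMatrix ℝ) a v * (x u0 - x v)
            = (∑ v, (G.adjMatrix ℝ) a v) * x u0 - ∑ v, (G.adjMatrix ℝ) a v * x v := by
          rw [Finset.sum_mul, ← Finset.sum_sub_distrib]
          congr 1; ext v; ring
        rw [this, hrow, h2, sub_self]
      have hnn : ∀ v ∈ Finset.univ, (0:ℝ) ≤ (G.adjMatrix ℝ) a v * (x u0 - x v) := by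
        intro v _
        refine mul_nonneg ?_ (sub_nonneg.mpr (hu0 v))
        simp [SimpleGraph.adjMatrix_apply]
        positivity
      have := (Finset.sum_eq_zero_iff_of_nonneg hnn).mp h1 b (Finset.mem_univ b)
      rw [SimpleGraph.adjMatrix_apply, if_pos hab, one_mul, sub_eq_zero] at this
      exact this.symm
    have hwalk : ∀ {a b : V}, G.Walk a b → x a = x u0 → x b = x u0 := by
      intro a b w
      induction w with
      | nil => exact id
      | cons h _ ih => exact fun ha => ih (adjstep _ _ h ha)
    have hconst : ∀ v, x v = x u0 := fun v => hwalk ((hconn u0 v).some) rfl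
    refine ⟨x u0, ?_⟩
    funext v
    rw [Pi.smul_apply, smul_eq_mul, ← hconst v, hyx v, mul_comm]
  -- s is a fixed vector
  have hsfix : Ahat.mulVec s = s := by
    funext u
    have key : ∀ (a b c : ℝ), b ≠ 0 → c ≠ 0 → a / (b * c) * c = a / b := by
      intro a b c hb hc; field_simp
    have h2 : ∀ v, Ahat u v * s v = (G.adjMatrix ℝ) u v / s u := by
      intro v
      rw [hAhat]
      exact key _ (s u) (s v) (hsne u) (hsne v)
    simp only [mulVec, dotProduct]
    rw [Finset.sum_congr rfl (fun v _ => h2 v), ← Finset.sum_div, hrow,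
      div_eq_iff (hsne u), hs2 u]
  have hsne0 : s ≠ 0 := by
    intro h
    exact hsne (Classical.arbitrary V) (congrFun h _)
  have heig : Module.End.eigenspace (Matrix.mulVecLin Ahat) 1 = Submodule.span ℝ {s} := by
    apply le_antisymm
    · intro y hy
      rw [Module.End.mem_eigenspace_iff, one_smul, mulVecLin_apply] at hy
      obtain ⟨c, hc⟩ := part1 y hy
      exact Submodule.mem_span_singleton.mpr ⟨c, hc.symm⟩
    · rw [Submodule.span_le, Set.singleton_subset_iff, SetLike.mem_coe,
        Module.End.mem_eigenspace_iff, one_smul, mulVecLin_apply]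
      exact hsfix
  rw [heig, finrank_span_singleton hsne0]
  exact ⟨part1, rfl⟩
end

section
/- (Theorem 1 of the paper.) Let G be a finite simple graph on a nonempty finite vertex set V in which every vertex has positive degree, assume G is connected, and let Â be its symmetrically normalized adjacency matrix. Let 0 < α < 1, let L ≥ 1 be a natural number, and define γ_l = α·(1−α)^l for 0 ≤ l ≤ L−1 and γ_L = (1−α)^L. Then ∑_{l=0}^{L} γ_l·1^l = 1, and for every real eigenvalue λ of Â with λ ≠ 1, |∑_{l=0}^{L} γ_l·λ^l| < 1; that is, |β_{γ,L}(λ)/β_{γ,L}(1)| < 1 strictly, so the initialized filter is a low-pass graph filter. -/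
open Matrix

lemma geom_aux_stmt13 (α : ℝ) : ∀ n : ℕ,
    ∑ l ∈ Finset.range n, α * (1 - α) ^ l = 1 - (1 - α) ^ n := by
  intro n
  induction n with
  | zero => simp
  | succ n ih => rw [Finset.sum_range_succ, ih]; ring

/-- Theorem 1 of the paper: with PPR-style initialization `γ_l = α(1-α)^l` for `l < L`,
`γ_L = (1-α)^L`, `0 < α < 1`, the filter `β_{γ,L}(λ) = ∑_{l=0}^{L} γ_l λ^l` satisfies
`β_{γ,L}(1) = 1`, and `|β_{γ,L}(λ)| < 1` for every real eigenvalue `λ ≠ 1` of the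
symmetrically normalized adjacency matrix of a connected graph with positive degrees:
the initialized filter is a low-pass graph filter. -/
theorem stmt_13 {V : Type*} [Fintype V] [Nonempty V] [DecidableEq V]
    (G : SimpleGraph V) [DecidableRel G.Adj]
    (hdeg : ∀ v : V, 0 < G.degree v)
    (hconn : G.Connected)
    (Ahat : Matrix V V ℝ)
    (hAhat : ∀ u v : V, Ahat u v =
      G.adjMatrix ℝ u v / (Real.sqrt (G.degree u) * Real.sqrt (G.degree v)))
    (α : ℝ) (hα0 : 0 < α) (hα1 : α < 1)
    (L : ℕ) (hL : 1 ≤ L) (γ : ℕ → ℝ)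
    (hγ : ∀ l : ℕ, l < L → γ l = α * (1 - α) ^ l)
    (hγL : γ L = (1 - α) ^ L) :
    (∑ l ∈ Finset.range (L + 1), γ l * (1 : ℝ) ^ l = 1) ∧
    (∀ (lam : ℝ) (x : V → ℝ), x ≠ 0 → Ahat.mulVec x = lam • x → lam ≠ 1 →
      |∑ l ∈ Finset.range (L + 1), γ l * lam ^ l| < 1) := by
  have hsum1 : ∑ l ∈ Finset.range (L + 1), γ l * (1 : ℝ) ^ l = 1 := by
    rw [Finset.sum_range_succ]
    rw [Finset.sum_congr rfl (fun l hl => by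
      rw [hγ l (Finset.mem_range.mp hl), one_pow, mul_one])]
    rw [geom_aux_stmt13, one_pow, mul_one, hγL]
    ring
  refine ⟨hsum1, ?_⟩
  intro lam x hx heig hne
  have hd : ∀ v : V, (0:ℝ) < (G.degree v : ℝ) := fun v => by exact_mod_cast hdeg v
  have hs : ∀ v : V, (0:ℝ) < Real.sqrt (G.degree v) :=
    fun v => Real.sqrt_pos.mpr (hd v)
  set y : V → ℝ := fun v => x v / Real.sqrt (G.degree v) with hy
  have hxy : ∀ v, x v = Real.sqrt (G.degree v) * y v := by
    intro v
    simp only [hy]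
    rw [mul_comm, div_mul_cancel₀ _ (hs v).ne']
  -- adjacency row sums equal degrees
  have hrow : ∀ v, ∑ u, (G.adjMatrix ℝ) v u = (G.degree v : ℝ) := by
    intro v
    simp [SimpleGraph.adjMatrix_apply, SimpleGraph.degree, SimpleGraph.neighborFinset,
      Finset.sum_boole, Finset.filter_filter]
  have hA0 : ∀ v u, (0:ℝ) ≤ (G.adjMatrix ℝ) v u := by
    intro v u
    simp only [SimpleGraph.adjMatrix_apply]
    split <;> norm_num
  -- key eigen-equation for y
  have hkey : ∀ v, ∑ u, (G.adjMatrix ℝ) v u * y u = lam * ((G.degree v : ℝ) * y v) := by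
    intro v
    have h1 := congrFun heig v
    simp only [Matrix.mulVec, dotProduct, Pi.smul_apply, smul_eq_mul] at h1
    have h2 : ∑ u, (G.adjMatrix ℝ) v u * y u
        = Real.sqrt (G.degree v) * ∑ u, Ahat v u * x u := by
      rw [Finset.mul_sum]
      refine Finset.sum_congr rfl fun u _ => ?_
      rw [hAhat, hxy u]
      have := (hs v).ne'
      have := (hs u).ne'
      field_simp
    rw [h2, h1, hxy v,
      show Real.sqrt (G.degree v) * (lam * (Real.sqrt (G.degree v) * y v))
        = lam * ((Real.sqrt (G.degree v) * Real.sqrt (G.degree v)) * y v) from by ring,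
      Real.mul_self_sqrt (hd v).le]
  -- pick coordinate with maximal |y|
  obtain ⟨v₀, -, hmax⟩ := Finset.exists_max_image (Finset.univ : Finset V)
    (fun v => |y v|) ⟨Classical.arbitrary V, Finset.mem_univ _⟩
  have hy0 : 0 < |y v₀| := by
    obtain ⟨u, hu⟩ := Function.ne_iff.mp hx
    have : y u ≠ 0 := by
      simp only [hy]
      exact div_ne_zero hu (hs u).ne'
    exact lt_of_lt_of_le (abs_pos.mpr this) (hmax u (Finset.mem_univ u))
  have hb : |lam| * ((G.degree v₀ : ℝ) * |y v₀|) ≤ (G.degree v₀ : ℝ) * |y v₀| := by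
    calc |lam| * ((G.degree v₀ : ℝ) * |y v₀|)
        = |lam * ((G.degree v₀ : ℝ) * y v₀)| := by
          rw [abs_mul, abs_mul, abs_of_pos (hd v₀)]
      _ = |∑ u, (G.adjMatrix ℝ) v₀ u * y u| := by rw [hkey v₀]
      _ ≤ ∑ u, |(G.adjMatrix ℝ) v₀ u * y u| := Finset.abs_sum_le_sum_abs _ _
      _ = ∑ u, (G.adjMatrix ℝ) v₀ u * |y u| := by
          refine Finset.sum_congr rfl fun u _ => ?_
          rw [abs_mul, abs_of_nonneg (hA0 v₀ u)]
      _ ≤ ∑ u, (G.adjMatrix ℝ) v₀ u * |y v₀| := by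
          refine Finset.sum_le_sum fun u _ => ?_
          exact mul_le_mul_of_nonneg_left (hmax u (Finset.mem_univ u)) (hA0 v₀ u)
      _ = (G.degree v₀ : ℝ) * |y v₀| := by rw [← Finset.sum_mul, hrow]
  have hlam : |lam| ≤ 1 := by
    have hpos : 0 < (G.degree v₀ : ℝ) * |y v₀| := mul_pos (hd v₀) hy0
    nlinarith [hb, hpos]
  have hlam1 : lam < 1 := lt_of_le_of_ne (abs_le.mp hlam).2 hne
  have hlamm1 : -1 ≤ lam := (abs_le.mp hlam).1
  -- positivity of the weights
  have hγpos : ∀ l, l ≤ L → 0 < γ l := by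
    intro l hl
    rcases lt_or_eq_of_le hl with h | h
    · rw [hγ l h]
      exact mul_pos hα0 (pow_pos (by linarith) l)
    · rw [h, hγL]
      exact pow_pos (by linarith) L
  -- split the sums at indices 0, 1
  have hset : Finset.range (L + 1) = insert 0 (insert 1 (Finset.Ico 2 (L + 1))) := by
    ext m
    simp only [Finset.mem_range, Finset.mem_insert, Finset.mem_Ico]
    omega
  have h01 : (0:ℕ) ∉ insert 1 (Finset.Ico 2 (L+1)) := by simp
  have h1n : (1:ℕ) ∉ Finset.Ico 2 (L+1) := by simp
  have hsum1' : γ 0 + (γ 1 + ∑ l ∈ Finset.Ico 2 (L+1), γ l) = 1 := by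
    have := hsum1
    rw [hset, Finset.sum_insert h01, Finset.sum_insert h1n] at this
    simpa using this
  rw [hset, Finset.sum_insert h01, Finset.sum_insert h1n, pow_zero, pow_one, mul_one]
  have hS : |∑ l ∈ Finset.Ico 2 (L+1), γ l * lam ^ l| ≤ ∑ l ∈ Finset.Ico 2 (L+1), γ l := by
    refine le_trans (Finset.abs_sum_le_sum_abs _ _) (Finset.sum_le_sum fun l hl => ?_)
    have hlL : l ≤ L := by
      have := (Finset.mem_Ico.mp hl).2
      omega
    have hγl := hγpos l hlL
    rw [abs_mul, abs_pow, abs_of_pos hγl]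
    calc γ l * |lam| ^ l ≤ γ l * 1 := by
          exact mul_le_mul_of_nonneg_left (pow_le_one₀ (abs_nonneg lam) hlam) hγl.le
      _ = γ l := mul_one _
  have hhead : |γ 0 + γ 1 * lam| < γ 0 + γ 1 := by
    have h0 := hγpos 0 (by omega)
    have h1 := hγpos 1 hL
    rw [abs_lt]
    constructor
    · nlinarith
    · nlinarith
  calc |γ 0 + (γ 1 * lam + ∑ l ∈ Finset.Ico 2 (L+1), γ l * lam ^ l)|
      = |(γ 0 + γ 1 * lam) + ∑ l ∈ Finset.Ico 2 (L+1), γ l * lam ^ l| := by rw [← add_assoc]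
    _ ≤ |γ 0 + γ 1 * lam| + |∑ l ∈ Finset.Ico 2 (L+1), γ l * lam ^ l| := abs_add_le _ _
    _ < (γ 0 + γ 1) + ∑ l ∈ Finset.Ico 2 (L+1), γ l := add_lt_add_of_lt_of_le hhead hS
    _ = 1 := by linarith [hsum1']
end
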